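/- Assume M = sup{x : F(x)<1} < ∞ and that lim_{x→M⁻} φ(x)/(M−x)^{p+1} = c for some p > 0, c > 0, where φ(x) = ∫_x^∞(1−F(u))du. Let μ solve μ' = λφ(μ), μ(0) = μ₀ ∈ [0, M). Then lim_{t→∞} t^{1/p}·(M − μ(t)) = (λpc)^{−1/p}. -/

import Mathlib

open MeasureTheory Set Filter
open scoped ENNReal

/-- if M < ∞ and φ(x)/(M−x)^{p+1} → c as x → M⁻ (p, c > 0), then
t^{1/p}·(M − μ(t)) → (λpc)^{−1/p} as t → ∞, i.e.
μ(t) = M − (λpc)^{−1/p}·t^{−1/p} + o(t^{−1/p}). -/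
theorem stmt17 {Ω : Type*} [MeasurableSpace Ω] (P : Measure Ω) [IsProbabilityMeasure P]
    (X : Ω → ℝ) (hX : Measurable X)
    (hint : Integrable (fun ω => max (X ω) 0) P)
    (F : ℝ → ℝ) (hF : ∀ x, F x = (P {ω | X ω ≤ x}).toReal)
    (M : ℝ) (hM1 : ∀ x : ℝ, x < M → F x < 1) (hM2 : ∀ x : ℝ, M ≤ x → F x = 1)
    (φ : ℝ → ℝ) (hφ : ∀ x, φ x = ∫ u in Ioi x, (1 - F u))
    (p c lam μ₀ : ℝ) (hp : 0 < p) (hc : 0 < c) (hlam : 0 < lam)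
    (hμ₀ : 0 ≤ μ₀) (hμ₀M : μ₀ < M)
    (hlim : Tendsto (fun x => φ x / (M - x) ^ (p + 1)) (nhdsWithin M (Iio M)) (nhds c))
    (μ : ℝ → ℝ) (hinit : μ 0 = μ₀)
    (hode : ∀ t : ℝ, 0 ≤ t → HasDerivAt μ (lam * φ (μ t)) t) :
    Tendsto (fun t : ℝ => t ^ (1 / p) * (M - μ t)) atTop
      (nhds ((lam * p * c) ^ (-(1 / p)))) := by
  have hFmono : Monotone F := by
    intro a b hab
    rw [hF a, hF b]
    exact ENNReal.toReal_mono (measure_ne_top P _)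
      (measure_mono (fun ω hω => le_trans hω hab))
  have hFnn : ∀ x, 0 ≤ F x := fun x => by rw [hF x]; exact ENNReal.toReal_nonneg
  have hF1 : ∀ x, F x ≤ 1 := by
    intro x
    rw [hF x]
    have : P {ω | X ω ≤ x} ≤ 1 := prob_le_one
    calc (P {ω | X ω ≤ x}).toReal ≤ (1 : ℝ≥0∞).toReal :=
          ENNReal.toReal_mono (by simp) this
      _ = 1 := by simp
  have hgmeas : Measurable (fun u => 1 - F u) := measurable_const.sub hFmono.measurable
  have hg0 : ∀ u, M ≤ u → 1 - F u = 0 := fun u hu => by rw [hM2 u hu]; ring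
  have hgnn : ∀ u, 0 ≤ 1 - F u := fun u => by linarith [hF1 u]
  have hgle1 : ∀ u, 1 - F u ≤ 1 := fun u => by linarith [hFnn u]
  -- integrability on any Ioi x
  have hIntIoc : ∀ a b : ℝ, IntegrableOn (fun u => 1 - F u) (Ioc a b) := by
    intro a b
    apply Measure.integrableOn_of_bounded (M := 1)
    · rw [Real.volume_Ioc]; exact ENNReal.ofReal_ne_top
    · exact (hgmeas.aestronglyMeasurable)
    · filter_upwards with u
      rw [Real.norm_eq_abs, abs_le]
      exact ⟨by linarith [hgnn u], hgle1 u⟩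
  have hIntIoiM : IntegrableOn (fun u => 1 - F u) (Ioi M) := by
    apply (integrableOn_congr_fun _ measurableSet_Ioi).2 (integrableOn_zero (s := Ioi M))
    intro u hu
    exact (hg0 u (le_of_lt hu)).symm ▸ rfl
  have hInt : ∀ x : ℝ, IntegrableOn (fun u => 1 - F u) (Ioi x) := by
    intro x
    refine IntegrableOn.mono_set ((hIntIoc x M).union hIntIoiM) ?_
    intro u hu
    rcases le_or_gt u M with h | h
    · exact Or.inl ⟨hu, h⟩
    · exact Or.inr h
  have hφdiff : ∀ x y : ℝ, x ≤ y → φ x = (∫ u in Ioc x y, (1 - F u)) + φ y := by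
    intro x y hxy
    rw [hφ x, hφ y, ← setIntegral_union (Ioc_disjoint_Ioi le_rfl) measurableSet_Ioi
      (hIntIoc x y) (hInt y), Ioc_union_Ioi_eq_Ioi hxy]
  have hφnn : ∀ x, 0 ≤ φ x := by
    intro x
    rw [hφ x]
    exact setIntegral_nonneg measurableSet_Ioi (fun u _ => hgnn u)
  have hφanti : Antitone φ := by
    intro a b hab
    rw [hφdiff a b hab]
    have : 0 ≤ ∫ u in Ioc a b, (1 - F u) :=
      setIntegral_nonneg measurableSet_Ioc (fun u _ => hgnn u)
    linarith
  have hφM0 : ∀ x, M ≤ x → φ x = 0 := by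
    intro x hx
    rw [hφ x]
    rw [setIntegral_congr_fun measurableSet_Ioi (g := fun _ => (0:ℝ))
      (fun u hu => hg0 u (le_trans hx (le_of_lt hu)))]
    simp
  have hφle : ∀ x, x ≤ M → φ x ≤ M - x := by
    intro x hx
    rw [hφdiff x M hx, hφM0 M le_rfl, add_zero]
    calc (∫ u in Ioc x M, (1 - F u)) ≤ ∫ _ in Ioc x M, (1:ℝ) :=
          setIntegral_mono_on (hIntIoc x M) (integrableOn_const (by
            rw [Real.volume_Ioc]; exact ENNReal.ofReal_ne_top))
            measurableSet_Ioc (fun u _ => hgle1 u)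
      _ = M - x := by
          rw [setIntegral_const, Real.volume_real_Ioc_of_le hx, smul_eq_mul, mul_one]
  have hφpos : ∀ x, x < M → 0 < φ x := by
    intro x hx
    set m := (x + M) / 2 with hm
    have hxm : x < m := by rw [hm]; linarith
    have hmM : m < M := by rw [hm]; linarith
    have h1 : (1 - F m) * (m - x) ≤ ∫ u in Ioc x m, (1 - F u) := by
      have : (∫ _ in Ioc x m, (1 - F m)) ≤ ∫ u in Ioc x m, (1 - F u) :=
        setIntegral_mono_on (integrableOn_const (by
          rw [Real.volume_Ioc]; exact ENNReal.ofReal_ne_top))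
          (hIntIoc x m) measurableSet_Ioc
          (fun u hu => by have := hFmono hu.2; linarith)
      rwa [setIntegral_const, Real.volume_real_Ioc_of_le (by linarith), smul_eq_mul,
        mul_comm] at this
    have h2 : 0 < (1 - F m) * (m - x) :=
      mul_pos (by linarith [hM1 m hmM]) (by linarith)
    have := hφdiff x m (le_of_lt hxm)
    have := hφnn m
    linarith
  have hμcont : ∀ t : ℝ, 0 ≤ t → ContinuousAt μ t := fun t ht => (hode t ht).continuousAt
  -- μ stays below M
  have hμltM : ∀ t : ℝ, 0 ≤ t → μ t < M := by
    by_contra hcon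
    push_neg at hcon
    obtain ⟨t₀, ht₀, hMt₀⟩ := hcon
    set S : Set ℝ := {t | 0 ≤ t ∧ M ≤ μ t} with hS
    have hSne : S.Nonempty := ⟨t₀, ht₀, hMt₀⟩
    have hSbdd : BddBelow S := ⟨0, fun t ht => ht.1⟩
    set s := sInf S with hs
    have hs0 : 0 ≤ s := le_csInf hSne (fun t ht => ht.1)
    have hμsM : M ≤ μ s := by
      by_contra h
      push_neg at h
      have h1 : ∀ᶠ t in nhds s, μ t < M :=
        (hμcont s hs0).eventually (eventually_lt_nhds h)
      obtain ⟨δ, hδ, hδ2⟩ := Metric.eventually_nhds_iff.1 h1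
      obtain ⟨t, htS, htlt⟩ := (csInf_lt_iff hSbdd hSne).1 (by linarith : s < s + δ)
      have hst : s ≤ t := csInf_le hSbdd htS
      have : μ t < M := hδ2 (by rw [Real.dist_eq, abs_lt]; constructor <;> linarith)
      linarith [htS.2]
    have hspos : 0 < s := by
      rcases lt_or_eq_of_le hs0 with h | h
      · exact h
      · exfalso; rw [← h, hinit] at hμsM; linarith
    have hltS : ∀ t, 0 ≤ t → t < s → μ t < M := by
      intro t ht hts
      by_contra h
      push_neg at h
      exact absurd (csInf_le hSbdd ⟨ht, h⟩) (not_le.2 hts)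
    have hμsle : μ s ≤ M := by
      have htend : Tendsto μ (nhdsWithin s (Iio s)) (nhds (μ s)) :=
        ((hμcont s hs0).tendsto).mono_left nhdsWithin_le_nhds
      refine le_of_tendsto htend ?_
      filter_upwards [Ioo_mem_nhdsLT hspos] with t ht
      exact le_of_lt (hltS t (le_of_lt ht.1) ht.2)
    -- on Icc 0 s, μ ≤ M
    have hle : ∀ t ∈ Icc (0:ℝ) s, μ t ≤ M := by
      rintro t ⟨h0, h1⟩
      rcases lt_or_eq_of_le h1 with h | h
      · exact le_of_lt (hltS t h0 h)
      · rw [h]; exact hμsle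
    -- h(t) = (M - μ t) * exp (lam * t) is monotone on Icc 0 s
    set g : ℝ → ℝ := fun t => (M - μ t) * Real.exp (lam * t) with hgdef
    have hgd : ∀ t ∈ Icc (0:ℝ) s, HasDerivAt g
        ((lam * ((M - μ t) - φ (μ t))) * Real.exp (lam * t)) t := by
      rintro t ⟨h0, _⟩
      have h1 : HasDerivAt (fun t => M - μ t) (-(lam * φ (μ t))) t := (hode t h0).const_sub M
      have h2 : HasDerivAt (fun t => Real.exp (lam * t)) (lam * Real.exp (lam * t)) t := by
        have := ((hasDerivAt_id t).const_mul lam).exp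
        exact this.congr_deriv (by simp only [id_eq, mul_one]; ring)
      have := h1.mul h2
      exact this.congr_deriv (by ring)
    have hmono : MonotoneOn g (Icc 0 s) := by
      apply monotoneOn_of_deriv_nonneg (convex_Icc 0 s)
      · intro t ht
        exact ((hgd t ht).continuousAt).continuousWithinAt
      · intro t ht
        rw [interior_Icc] at ht
        exact ((hgd t (Ioo_subset_Icc_self ht)).differentiableAt).differentiableWithinAt
      · intro t ht
        rw [interior_Icc] at ht
        rw [(hgd t (Ioo_subset_Icc_self ht)).deriv]
        have hμt : μ t ≤ M := hle t (Ioo_subset_Icc_self ht)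
        have h3 : 0 ≤ (M - μ t) - φ (μ t) := by linarith [hφle (μ t) hμt]
        positivity
    have h0 : g 0 ≤ g s := hmono ⟨le_rfl, hs0⟩ ⟨hs0, le_rfl⟩ hs0
    have hgs : g s = 0 := by
      rw [hgdef]; simp only; rw [le_antisymm hμsle hμsM]; ring
    have hg0 : 0 < g 0 := by
      rw [hgdef]; simp only [hinit, mul_zero, Real.exp_zero, mul_one]; linarith
    rw [hgs] at h0
    linarith
  -- μ monotone on Ici 0
  have hμmono : MonotoneOn μ (Ici 0) := by
    apply monotoneOn_of_deriv_nonneg (convex_Ici 0)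
    · intro t ht; exact (hμcont t ht).continuousWithinAt
    · intro t ht
      rw [interior_Ici] at ht
      exact ((hode t (le_of_lt ht)).differentiableAt).differentiableWithinAt
    · intro t ht
      rw [interior_Ici] at ht
      rw [(hode t (le_of_lt ht)).deriv]
      exact mul_nonneg (le_of_lt hlam) (hφnn _)
  -- μ tends to M
  have key : ∀ a, a < M → ∀ᶠ t in atTop, a < μ t := by
    intro a haM
    have : ∃ T, 0 ≤ T ∧ a < μ T := by
      by_contra h
      push_neg at h
      set δ := φ a with hδdef
      have hδ : 0 < δ := hφpos a haM
      -- μ t - lam*δ*t is monotone on Ici 0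
      set g : ℝ → ℝ := fun t => μ t - lam * δ * t with hgdef
      have hgd : ∀ t : ℝ, 0 ≤ t → HasDerivAt g (lam * φ (μ t) - lam * δ) t := by
        intro t ht
        have h2 : HasDerivAt (fun t : ℝ => lam * δ * t) (lam * δ) t := by
          simpa using (hasDerivAt_id t).const_mul (lam * δ)
        exact (hode t ht).sub h2
      have hmono : MonotoneOn g (Ici 0) := by
        apply monotoneOn_of_deriv_nonneg (convex_Ici 0)
        · intro t ht; exact ((hgd t ht).continuousAt).continuousWithinAt
        · intro t ht
          rw [interior_Ici] at ht
          exact ((hgd t (le_of_lt ht)).differentiableAt).differentiableWithinAt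
        · intro t ht
          rw [interior_Ici] at ht
          rw [(hgd t (le_of_lt ht)).deriv]
          have : δ ≤ φ (μ t) := hφanti (h t (le_of_lt ht))
          nlinarith
      set T := (a - μ₀) / (lam * δ) + 1 with hT
      have hT0 : 0 ≤ T := by
        have h1 : 0 ≤ (a - μ₀) / (lam * δ) := by
          apply div_nonneg _ (by positivity)
          have := h 0 le_rfl; rw [hinit] at this; linarith
        rw [hT]; linarith
      have := hmono (mem_Ici.2 le_rfl) hT0 hT0
      rw [hgdef] at this
      simp only [hinit, mul_zero, sub_zero] at this
      have hlt : a < μ T := by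
        have hexp : lam * δ * T = (a - μ₀) + lam * δ := by
          rw [hT]; field_simp
        nlinarith
      exact absurd (h T hT0) (not_le.2 hlt)
    obtain ⟨T, hT0, hTa⟩ := this
    filter_upwards [eventually_ge_atTop T] with t ht
    exact lt_of_lt_of_le hTa (hμmono (mem_Ici.2 hT0) (mem_Ici.2 (le_trans hT0 ht)) ht)
  have hμtend : Tendsto μ atTop (nhds M) := by
    rw [tendsto_order]
    constructor
    · intro a ha; exact key a ha
    · intro a ha
      filter_upwards [eventually_ge_atTop (0:ℝ)] with t ht
      exact lt_trans (hμltM t ht) ha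
  set q : ℝ → ℝ := fun t => φ (μ t) / (M - μ t) ^ (p + 1) with hqdef
  have hq : Tendsto q atTop (nhds c) := by
    apply hlim.comp
    rw [tendsto_nhdsWithin_iff]
    refine ⟨hμtend, ?_⟩
    filter_upwards [eventually_ge_atTop (0:ℝ)] with t ht
    exact hμltM t ht
  set w : ℝ → ℝ := fun t => (M - μ t) ^ (-p : ℝ) with hwdef
  set A := p * lam * c with hA
  have hApos : 0 < A := by positivity
  have hw' : ∀ t : ℝ, 0 ≤ t → HasDerivAt w (p * lam * q t) t := by
    intro t ht
    have hv : 0 < M - μ t := by linarith [hμltM t ht]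
    have h1 : HasDerivAt (fun t => M - μ t) (-(lam * φ (μ t))) t := (hode t ht).const_sub M
    have h2 : HasDerivAt (fun x : ℝ => x ^ (-p : ℝ)) ((-p) * (M - μ t) ^ ((-p) - 1)) (M - μ t) :=
      Real.hasDerivAt_rpow_const (Or.inl (ne_of_gt hv))
    have h3 := h2.comp t h1
    refine h3.congr_deriv ?_
    symm
    have he : ((-p) - 1 : ℝ) = -(p + 1) := by ring
    rw [hqdef]
    simp only
    rw [he, Real.rpow_neg (le_of_lt hv)]
    have hvp : (0:ℝ) < (M - μ t) ^ (p + 1) := Real.rpow_pos_of_pos hv _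
    field_simp
  have hw't : Tendsto (fun t => p * lam * q t) atTop (nhds A) := by
    rw [hA]; exact hq.const_mul (p * lam)
  -- main step: w t / t → A
  have hwt : Tendsto (fun t => w t / t) atTop (nhds A) := by
    rw [Metric.tendsto_atTop]
    intro ε hε
    obtain ⟨T₀, hT₀⟩ := (Metric.tendsto_atTop.1 hw't) (ε / 2) (by linarith)
    set T := max T₀ 0 with hTdef
    have hT0 : 0 ≤ T := le_max_right _ _
    have hbound : ∀ t : ℝ, T ≤ t → |w t - A * t - (w T - A * T)| ≤ ε / 2 * (t - T) := by
      intro t hTt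
      have hder : ∀ x ∈ Icc T t, HasDerivWithinAt (fun x => w x - A * x)
          (p * lam * q x - A) (Icc T t) x := by
        intro x hx
        have h0x : 0 ≤ x := le_trans hT0 hx.1
        have h1 : HasDerivAt (fun x : ℝ => A * x) A x := by
          simpa using (hasDerivAt_id x).const_mul A
        exact ((hw' x h0x).sub h1).hasDerivWithinAt
      have hbd : ∀ x ∈ Icc T t, ‖p * lam * q x - A‖ ≤ ε / 2 := by
        intro x hx
        have := hT₀ x (le_trans (le_max_left _ _) hx.1)
        rw [Real.dist_eq] at this
        rw [Real.norm_eq_abs]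
        exact le_of_lt this
      have key := Convex.norm_image_sub_le_of_norm_hasDerivWithin_le hder hbd
        (convex_Icc T t) (left_mem_Icc.2 hTt) (right_mem_Icc.2 hTt)
      rw [Real.norm_eq_abs, Real.norm_eq_abs, abs_of_nonneg (by linarith : (0:ℝ) ≤ t - T)] at key
      exact key
    set C := |w T - A * T| with hC
    refine ⟨max T (2 * C / ε + 1), fun t ht => ?_⟩
    have h1 : T ≤ t := le_trans (le_max_left _ _) ht
    have h2 : 2 * C / ε + 1 ≤ t := le_trans (le_max_right _ _) ht
    have hC0 : 0 ≤ C := abs_nonneg _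
    have htpos : 0 < t := by
      have : 0 ≤ 2 * C / ε := by positivity
      linarith
    have hb := hbound t h1
    have h3 : |w t - A * t| ≤ C + ε / 2 * (t - T) := by
      calc |w t - A * t| = |(w t - A * t - (w T - A * T)) + (w T - A * T)| := by ring_nf
        _ ≤ |w t - A * t - (w T - A * T)| + |w T - A * T| := abs_add_le _ _
        _ ≤ ε / 2 * (t - T) + C := by rw [hC]; linarith
        _ = C + ε / 2 * (t - T) := by ring
    have h5 : 2 * C < ε * t := by
      have h4 : 2 * C / ε < t := by linarith
      calc 2 * C = (2 * C / ε) * ε := (div_mul_cancel₀ (2*C) (ne_of_gt hε)).symm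
        _ < t * ε := mul_lt_mul_of_pos_right h4 hε
        _ = ε * t := mul_comm _ _
    have h7 : |w t - A * t| < ε * t := by nlinarith
    rw [Real.dist_eq]
    have h8 : |w t / t - A| = |w t - A * t| / t := by
      have he2 : w t / t - A = (w t - A * t) / t := by field_simp
      rw [he2, abs_div, abs_of_pos htpos]
    rw [h8]
    rw [div_lt_iff₀ htpos]
    exact h7
  -- conclude
  have hcomp : Tendsto (fun t => (w t / t) ^ (-(1/p) : ℝ)) atTop (nhds (A ^ (-(1/p) : ℝ))) :=
    ((Real.continuousAt_rpow_const A (-(1/p)) (Or.inl (ne_of_gt hApos))).tendsto).comp hwt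
  have hval : A ^ (-(1/p) : ℝ) = (lam * p * c) ^ (-(1 / p) : ℝ) := by
    rw [hA]; congr 1; ring
  rw [← hval]
  apply hcomp.congr'
  filter_upwards [eventually_gt_atTop (0:ℝ)] with t ht
  have hv : 0 < M - μ t := by linarith [hμltM t (le_of_lt ht)]
  show (w t / t) ^ (-(1/p) : ℝ) = t ^ (1/p) * (M - μ t)
  have hw : w t = (M - μ t) ^ (-p : ℝ) := rfl
  rw [hw, div_eq_mul_inv,
    Real.mul_rpow (Real.rpow_nonneg (le_of_lt hv) _) (inv_nonneg.2 (le_of_lt ht)),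
    ← Real.rpow_mul (le_of_lt hv),
    (by field_simp : (-p) * (-(1/p)) = (1:ℝ)), Real.rpow_one,
    Real.inv_rpow (le_of_lt ht), Real.rpow_neg (le_of_lt ht), inv_inv, mul_comm]
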